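/- Let K be a lazy, reversible Markov kernel with respect to π, conductance φ, and assume the initial distribution ν has a bounded density dν/dπ with respect to π. Then for every measurable A and j ∈ ℕ, |∫_Ω K^j(x,A) ν(dx) − π(A)| ≤ ‖dν/dπ‖_∞^{1/2} · (1 − φ²/2)^j. -/

import Mathlib

open MeasureTheory ProbabilityTheory

def Reversible {Ω : Type*} [MeasurableSpace Ω] (K : Kernel Ω Ω) (π : Measure Ω) : Prop :=
  ∀ A B : Set Ω, MeasurableSet A → MeasurableSet B →
    ∫⁻ x in B, K x A ∂π = ∫⁻ x in A, K x B ∂π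

def Lazy {Ω : Type*} [MeasurableSpace Ω] (K : Kernel Ω Ω) : Prop :=
  ∀ x : Ω, (1 : ENNReal) / 2 ≤ K x {x}

noncomputable def conductance {Ω : Type*} [MeasurableSpace Ω] (K : Kernel Ω Ω)
    (π : Measure Ω) : ℝ :=
  sInf {r : ℝ | ∃ A : Set Ω, MeasurableSet A ∧ 0 < π A ∧ π A ≤ 1 / 2 ∧
    r = (∫⁻ x in A, K x Aᶜ ∂π).toReal / (π A).toReal}

/-- The `j`-step transition kernel. -/
noncomputable def Kpow {Ω : Type*} [MeasurableSpace Ω] (K : Kernel Ω Ω) : ℕ → Kernel Ω Ω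
  | 0 => Kernel.id
  | n + 1 => (Kpow K n) ∘ₖ K

open Set

set_option linter.unusedSectionVars false
set_option linter.unusedVariables false
set_option maxHeartbeats 1000000

namespace LS

variable {Ω : Type*} [MeasurableSpace Ω]

structure Bdd (f : Ω → ℝ) : Prop where
  meas : Measurable f
  bdd : ∃ C, ∀ x, |f x| ≤ C

lemma Bdd.integrable {f : Ω → ℝ} (hf : Bdd f) (μ : Measure Ω) [IsFiniteMeasure μ] :
    Integrable f μ := by
  obtain ⟨C, hC⟩ := hf.bdd
  exact (integrable_const C).mono' hf.meas.aestronglyMeasurable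
    (Filter.Eventually.of_forall (fun x => by simpa using hC x))

lemma Bdd.const (c : ℝ) : Bdd (fun _ : Ω => c) :=
  ⟨measurable_const, ⟨|c|, fun _ => le_rfl⟩⟩

lemma Bdd.add {f g : Ω → ℝ} (hf : Bdd f) (hg : Bdd g) : Bdd (fun x => f x + g x) := by
  obtain ⟨C, hC⟩ := hf.bdd; obtain ⟨D, hD⟩ := hg.bdd
  exact ⟨hf.meas.add hg.meas, ⟨C + D, fun x => (abs_add_le _ _).trans (add_le_add (hC x) (hD x))⟩⟩

lemma Bdd.neg {f : Ω → ℝ} (hf : Bdd f) : Bdd (fun x => - f x) := by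
  obtain ⟨C, hC⟩ := hf.bdd
  exact ⟨hf.meas.neg, ⟨C, fun x => by simpa using hC x⟩⟩

lemma Bdd.sub {f g : Ω → ℝ} (hf : Bdd f) (hg : Bdd g) : Bdd (fun x => f x - g x) := by
  simpa [sub_eq_add_neg] using hf.add hg.neg

lemma Bdd.mul {f g : Ω → ℝ} (hf : Bdd f) (hg : Bdd g) : Bdd (fun x => f x * g x) := by
  obtain ⟨C, hC⟩ := hf.bdd; obtain ⟨D, hD⟩ := hg.bdd
  refine ⟨hf.meas.mul hg.meas, ⟨C * D, fun x => ?_⟩⟩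
  rw [abs_mul]
  exact mul_le_mul (hC x) (hD x) (abs_nonneg _) ((abs_nonneg _).trans (hC x))

lemma Bdd.smul {f : Ω → ℝ} (hf : Bdd f) (c : ℝ) : Bdd (fun x => c * f x) :=
  (Bdd.const c).mul hf

lemma Bdd.sq {f : Ω → ℝ} (hf : Bdd f) : Bdd (fun x => f x ^ 2) := by
  have := hf.mul hf
  simpa [pow_two] using this

lemma Bdd.indicator {A : Set Ω} (hA : MeasurableSet A) : Bdd (A.indicator (fun _ => (1:ℝ))) := by
  refine ⟨measurable_const.indicator hA, ⟨1, fun x => ?_⟩⟩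
  by_cases hx : x ∈ A <;> simp [hx]

lemma Bdd.posPart {f : Ω → ℝ} (hf : Bdd f) : Bdd (fun x => max (f x) 0) := by
  obtain ⟨C, hC⟩ := hf.bdd
  refine ⟨hf.meas.max measurable_const, ⟨C, fun x => ?_⟩⟩
  have h := abs_le.1 (hC x)
  rw [abs_le]
  refine ⟨le_trans (by linarith [h.1]) (le_max_left _ _), max_le h.2 (by linarith [abs_nonneg (f x), h.2])⟩


lemma Bdd.abs {f : Ω → ℝ} (hf : Bdd f) : Bdd (fun x => |f x|) := by
  obtain ⟨C, hC⟩ := hf.bdd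
  exact ⟨hf.meas.abs, ⟨C, fun x => by simpa [abs_abs] using hC x⟩⟩

lemma Bdd.fst {f : Ω → ℝ} (hf : Bdd f) : Bdd (fun p : Ω × Ω => f p.1) := by
  obtain ⟨C, hC⟩ := hf.bdd
  exact ⟨hf.meas.comp measurable_fst, ⟨C, fun p => hC p.1⟩⟩

lemma Bdd.snd {f : Ω → ℝ} (hf : Bdd f) : Bdd (fun p : Ω × Ω => f p.2) := by
  obtain ⟨C, hC⟩ := hf.bdd
  exact ⟨hf.meas.comp measurable_snd, ⟨C, fun p => hC p.2⟩⟩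

lemma cs_mu (μ : Measure Ω) [IsFiniteMeasure μ] {f g : Ω → ℝ} (hf : Bdd f) (hg : Bdd g) :
    (∫ x, f x * g x ∂μ)^2 ≤ (∫ x, f x^2 ∂μ) * (∫ x, g x^2 ∂μ) := by
  have cs_of_quadratic : ∀ {a b c : ℝ}, (∀ t : ℝ, 0 ≤ c * t^2 + 2*b*t + a) → b^2 ≤ a * c := by
    intro a b c h
    have := discrim_le_zero (a := c) (b := 2*b) (c := a) (fun t => by have := h t; nlinarith)
    rw [discrim] at this
    nlinarith
  refine cs_of_quadratic (fun t => ?_)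
  have h0 : 0 ≤ ∫ x, (f x + t * g x)^2 ∂μ := integral_nonneg (fun x => sq_nonneg _)
  have hexp : ∀ x, (f x + t * g x)^2
      = (f x^2 + t * (2 * (f x * g x))) + t^2 * g x^2 := fun x => by ring
  rw [show (fun x => (f x + t * g x)^2) = fun x => (f x^2 + t * (2 * (f x * g x))) + t^2 * g x^2
    from funext hexp] at h0
  rw [integral_add ((hf.sq.add (((hf.mul hg).smul 2).smul t)).integrable μ)
      ((hg.sq.smul (t^2)).integrable μ),
    integral_add (hf.sq.integrable μ) ((((hf.mul hg).smul 2).smul t).integrable μ),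
    integral_const_mul, integral_const_mul, integral_const_mul] at h0
  nlinarith [h0]

section Kern

variable [MeasurableSingletonClass Ω]
variable (K : Kernel Ω Ω) [IsMarkovKernel K] (π : Measure Ω) [IsProbabilityMeasure π]

noncomputable def op (f : Ω → ℝ) (x : Ω) : ℝ := ∫ y, f y ∂(K x)

lemma Bdd.op {f : Ω → ℝ} (hf : Bdd f) : Bdd (LS.op K f) := by
  obtain ⟨C, hC⟩ := hf.bdd
  refine ⟨(StronglyMeasurable.integral_kernel_prod_right'
      (f := fun p : Ω × Ω => f p.2)
      (hf.meas.comp measurable_snd).stronglyMeasurable).measurable, ⟨C, fun x => ?_⟩⟩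
  have := norm_integral_le_of_norm_le_const (μ := K x) (f := f) (C := C)
    (Filter.Eventually.of_forall (fun y => by simpa using hC y))
  simpa [LS.op] using this

lemma op_add {f g : Ω → ℝ} (hf : Bdd f) (hg : Bdd g) (x : Ω) :
    op K (fun y => f y + g y) x = op K f x + op K g x :=
  integral_add (hf.integrable _) (hg.integrable _)

lemma op_smul (f : Ω → ℝ) (c : ℝ) (x : Ω) :
    op K (fun y => c * f y) x = c * op K f x := by
  simp [op, integral_const_mul]

lemma op_const (c : ℝ) (x : Ω) : op K (fun _ => c) x = c := by
  simp [op]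

lemma op_sub {f g : Ω → ℝ} (hf : Bdd f) (hg : Bdd g) (x : Ω) :
    op K (fun y => f y - g y) x = op K f x - op K g x :=
  integral_sub (hf.integrable _) (hg.integrable _)

noncomputable def opiter : ℕ → (Ω → ℝ) → Ω → ℝ
  | 0, h => h
  | (j+1), h => opiter j (op K h)

lemma opiter_succ (j : ℕ) (h : Ω → ℝ) : opiter K (j+1) h = opiter K j (op K h) := rfl

lemma opiter_zero (h : Ω → ℝ) : opiter K 0 h = h := rfl

lemma opiter_bdd {h : Ω → ℝ} (hh : Bdd h) : ∀ j, Bdd (opiter K j h) := by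
  intro j
  induction j generalizing h hh with
  | zero => exact hh
  | succ n ih => exact ih (hh.op K)

lemma opiter_succ' (j : ℕ) (h : Ω → ℝ) : opiter K (j+1) h = op K (opiter K j h) := by
  induction j generalizing h with
  | zero => rfl
  | succ n ih =>
      rw [opiter_succ, ih (op K h), opiter_succ]

lemma opiter_one : ∀ j, opiter K j (fun _ => (1:ℝ)) = fun _ => (1:ℝ) := by
  intro j
  induction j with
  | zero => rfl
  | succ n ih =>
      rw [opiter_succ' , ih]
      funext x
      rw [op_const]

lemma opiter_sub {h h' : Ω → ℝ} (hh : Bdd h) (hh' : Bdd h') :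
    ∀ j, opiter K j (fun x => h x - h' x) = fun x => opiter K j h x - opiter K j h' x := by
  intro j
  induction j generalizing h h' hh hh' with
  | zero => rfl
  | succ n ih =>
      rw [opiter_succ]
      have : op K (fun x => h x - h' x) = fun x => op K h x - op K h' x :=
        funext (fun x => op_sub K hh hh' x)
      rw [this, ih (hh.op K) (hh'.op K), opiter_succ, opiter_succ]

end Kern

end LS

open LS

section Main

variable {Ω : Type*} [MeasurableSpace Ω] [MeasurableSingletonClass Ω]
variable (K : Kernel Ω Ω) [IsMarkovKernel K] (π : Measure Ω) [IsProbabilityMeasure π]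

lemma swap_eq (hrev : Reversible K π) : (π ⊗ₘ K).map Prod.swap = π ⊗ₘ K := by
  haveI : IsProbabilityMeasure ((π ⊗ₘ K).map Prod.swap) :=
    Measure.isProbabilityMeasure_map measurable_swap.aemeasurable
  refine ext_of_generate_finite _ generateFrom_prod.symm isPiSystem_prod ?_ (by simp)
  rintro s ⟨A, hA, B, hB, rfl⟩
  rw [Measure.map_apply measurable_swap ((hA : MeasurableSet A).prod (hB : MeasurableSet B)),
    Set.preimage_swap_prod, Measure.compProd_apply_prod hB hA,
    Measure.compProd_apply_prod hA hB]
  exact (hrev B A hB hA).symm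

lemma meas_swap (hrev : Reversible K π) {E : Set (Ω × Ω)} (hE : MeasurableSet E) :
    (π ⊗ₘ K) (Prod.swap ⁻¹' E) = (π ⊗ₘ K) E := by
  rw [← Measure.map_apply measurable_swap hE, swap_eq K π hrev]

lemma integrable_pair {F : Ω × Ω → ℝ} (hm : Measurable F) {C : ℝ} (hC : ∀ p, |F p| ≤ C) :
    Integrable F (π ⊗ₘ K) :=
  (integrable_const C).mono' hm.aestronglyMeasurable
    (Filter.Eventually.of_forall (fun p => by simpa using hC p))

lemma integral_swap_eq (hrev : Reversible K π) {F : Ω × Ω → ℝ}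
    (hF : AEStronglyMeasurable F (π ⊗ₘ K)) :
    ∫ p, F (Prod.swap p) ∂(π ⊗ₘ K) = ∫ p, F p ∂(π ⊗ₘ K) := by
  conv_rhs => rw [← swap_eq K π hrev]
  rw [integral_map measurable_swap.aemeasurable (by rwa [swap_eq K π hrev])]

lemma pair_bdd {f g : Ω → ℝ} (hf : Bdd f) (hg : Bdd g) :
    Integrable (fun p : Ω × Ω => f p.1 * g p.2) (π ⊗ₘ K) := by
  obtain ⟨C, hC⟩ := hf.bdd; obtain ⟨D, hD⟩ := hg.bdd
  refine integrable_pair K π ((hf.meas.comp measurable_fst).mul (hg.meas.comp measurable_snd))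
    (C := C * D) (fun p => ?_)
  rw [abs_mul]
  exact mul_le_mul (hC _) (hD _) (abs_nonneg _) ((abs_nonneg (f p.1)).trans (hC _))

lemma integral_pairKP {f g : Ω → ℝ} (hf : Bdd f) (hg : Bdd g) :
    ∫ p, f p.1 * g p.2 ∂(π ⊗ₘ K) = ∫ x, f x * op K g x ∂π := by
  rw [Measure.integral_compProd (pair_bdd K π hf hg)]
  congr 1 with x
  simp [op, integral_const_mul]

lemma ip_op_comm (hrev : Reversible K π) {f g : Ω → ℝ} (hf : Bdd f) (hg : Bdd g) :
    ∫ x, op K f x * g x ∂π = ∫ x, f x * op K g x ∂π := by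
  have h1 : ∫ p, g p.1 * f p.2 ∂(π ⊗ₘ K) = ∫ x, g x * op K f x ∂π :=
    integral_pairKP K π hg hf
  have h2 : ∫ p, f p.1 * g p.2 ∂(π ⊗ₘ K) = ∫ x, f x * op K g x ∂π :=
    integral_pairKP K π hf hg
  have h3 : ∫ p, g p.1 * f p.2 ∂(π ⊗ₘ K) = ∫ p, f p.1 * g p.2 ∂(π ⊗ₘ K) := by
    have := integral_swap_eq K π hrev (F := fun p => g p.1 * f p.2)
      (pair_bdd K π hg hf).aestronglyMeasurable
    rw [← this]
    congr 1 with p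
    simp [mul_comm]
  rw [← h2, ← h3, h1]
  congr 1 with x
  ring

lemma integral_op_eq (hrev : Reversible K π) {f : Ω → ℝ} (hf : Bdd f) :
    ∫ x, op K f x ∂π = ∫ x, f x ∂π := by
  have := ip_op_comm K π hrev hf (Bdd.const 1)
  simpa [op_const] using this


lemma cs_of_quadratic {a b c : ℝ} (h : ∀ t : ℝ, 0 ≤ c * t^2 + 2*b*t + a) : b^2 ≤ a * c := by
  have := discrim_le_zero (a := c) (b := 2*b) (c := a) (fun t => by have := h t; nlinarith)
  rw [discrim] at this
  nlinarith

lemma sq_integral_le {μ : Measure Ω} [IsFiniteMeasure μ] {f : Ω → ℝ} (hf : Bdd f) :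
    (∫ x, f x ∂μ)^2 ≤ (μ univ).toReal * ∫ x, f x^2 ∂μ := by
  by_cases hμ : μ = 0
  · simp [hμ]
  set m := (μ univ).toReal with hm
  set I := ∫ x, f x ∂μ with hI
  have h0 : 0 ≤ ∫ x, (m * f x - I)^2 ∂μ := integral_nonneg (fun x => sq_nonneg _)
  have expand : ∫ x, (m * f x - I)^2 ∂μ
      = m^2 * (∫ x, f x^2 ∂μ) - (2*m*I)*I + m * I^2 := by
    have h1 : ∀ x, (m * f x - I)^2 = (m^2 * f x^2 - (2*m*I)*f x) + I^2 := fun x => by ring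
    simp_rw [h1]
    rw [integral_add (((hf.sq.smul (m^2)).sub (hf.smul (2*m*I))).integrable μ)
        (integrable_const _),
      integral_sub ((hf.sq.smul (m^2)).integrable μ) ((hf.smul (2*m*I)).integrable μ),
      integral_const_mul, integral_const_mul, integral_const]
    simp [← hI, ← hm, Measure.real]
  have hmpos : 0 < m := ENNReal.toReal_pos (by simpa using hμ) (measure_ne_top μ _)
  nlinarith [h0, expand]

lemma lazy_pointwise (hlazy : Lazy K) {f : Ω → ℝ} (hf : Bdd f) (x : Ω) :
    (2 * op K f x - f x)^2 ≤ 2 * op K (fun y => f y^2) x - f x^2 := by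
  have hle : (2:ENNReal)⁻¹ • Measure.dirac x ≤ K x := by
    refine Measure.le_iff.2 fun s hs => ?_
    rw [Measure.smul_apply, Measure.dirac_apply' _ hs]
    by_cases hx : x ∈ s
    · simp only [hx, indicator_of_mem, smul_eq_mul, mul_one, Pi.one_apply]
      calc (2:ENNReal)⁻¹ = 1/2 := by rw [one_div]
      _ ≤ K x {x} := hlazy x
      _ ≤ K x s := measure_mono (singleton_subset_iff.2 hx)
    · simp [hx]
  haveI : IsFiniteMeasure ((2:ENNReal)⁻¹ • Measure.dirac x) := by
    constructor
    rw [Measure.smul_apply]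
    simp only [measure_univ, smul_eq_mul, mul_one]
    exact ENNReal.inv_lt_top.2 (by norm_num)
  set μ' := K x - (2:ENNReal)⁻¹ • Measure.dirac x with hμ'
  have hadd : μ' + (2:ENNReal)⁻¹ • Measure.dirac x = K x :=
    Measure.sub_add_cancel_of_le hle
  haveI : IsFiniteMeasure μ' := isFiniteMeasure_of_le (K x) Measure.sub_le
  have hmass : μ' univ = 2⁻¹ := by
    have h := congrArg (fun m : Measure Ω => m univ) hadd
    simp only [Measure.add_apply, Measure.smul_apply, Measure.dirac_apply' _ MeasurableSet.univ,
      mem_univ, indicator_of_mem, smul_eq_mul, mul_one, measure_univ, Pi.one_apply] at h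
    have h3 : μ' univ = 1 - 2⁻¹ := by
      rw [← h, ENNReal.add_sub_cancel_right (by norm_num)]
    rw [h3, ← ENNReal.inv_two_add_inv_two, ENNReal.add_sub_cancel_right (by norm_num)]
  have hint : ∀ g : Ω → ℝ, Bdd g → ∫ y, g y ∂(K x) = (∫ y, g y ∂μ') + 2⁻¹ * g x := by
    intro g hg
    rw [← hadd, integral_add_measure (hg.integrable μ') (hg.integrable _),
      integral_smul_measure, integral_dirac]
    simp
  have hcs : (∫ y, f y ∂μ')^2 ≤ 2⁻¹ * ∫ y, f y^2 ∂μ' := by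
    have := sq_integral_le (μ := μ') hf
    rw [hmass] at this
    simpa [ENNReal.toReal_inv] using this
  have h1 : op K f x = (∫ y, f y ∂μ') + 2⁻¹ * f x := hint f hf
  have h2 : op K (fun y => f y^2) x = (∫ y, f y^2 ∂μ') + 2⁻¹ * f x^2 := hint _ hf.sq
  rw [h1, h2]
  nlinarith [hcs]


lemma op_sq_le (hlazy : Lazy K) (hrev : Reversible K π) {f : Ω → ℝ} (hf : Bdd f) :
    ∫ x, (op K f x)^2 ∂π ≤ ∫ x, op K f x * f x ∂π := by
  have hop : Bdd (op K f) := hf.op K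
  have key := lazy_pointwise K hlazy hf
  have hmono : ∫ x, (2 * op K f x - f x)^2 ∂π
      ≤ ∫ x, (2 * op K (fun y => f y^2) x - f x^2) ∂π :=
    integral_mono (((hop.smul 2).sub hf).sq.integrable π)
      ((((hf.sq.op K).smul 2).sub hf.sq).integrable π) (fun x => key x)
  have e1 : ∫ x, (2 * op K f x - f x)^2 ∂π
      = 4 * ∫ x, (op K f x)^2 ∂π - 4 * ∫ x, op K f x * f x ∂π + ∫ x, f x^2 ∂π := by
    have h1 : ∀ x, (2 * op K f x - f x)^2
        = (4 * (op K f x)^2 - 4 * (op K f x * f x)) + f x^2 := fun x => by ring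
    simp_rw [h1]
    rw [integral_add (((hop.sq.smul 4).sub ((hop.mul hf).smul 4)).integrable π)
        (hf.sq.integrable π),
      integral_sub ((hop.sq.smul 4).integrable π) (((hop.mul hf).smul 4).integrable π),
      integral_const_mul, integral_const_mul]
  have e2 : ∫ x, (2 * op K (fun y => f y^2) x - f x^2) ∂π
      = 2 * ∫ x, f x^2 ∂π - ∫ x, f x^2 ∂π := by
    rw [integral_sub (((hf.sq.op K).smul 2).integrable π) (hf.sq.integrable π),
      integral_const_mul, integral_op_eq K π hrev hf.sq]
  rw [e1, e2] at hmono
  linarith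

lemma s_nonneg (hlazy : Lazy K) (hrev : Reversible K π) {f : Ω → ℝ} (hf : Bdd f) :
    0 ≤ ∫ x, op K f x * f x ∂π :=
  le_trans (integral_nonneg (fun x => sq_nonneg _)) (op_sq_le K π hlazy hrev hf)

lemma op_comb (f g : Ω → ℝ) (hf : Bdd f) (hg : Bdd g) (t : ℝ) (x : Ω) :
    op K (fun y => f y + t * g y) x = op K f x + t * op K g x := by
  rw [op_add K hf (hg.smul t), op_smul]

lemma s_cs (hlazy : Lazy K) (hrev : Reversible K π) {f g : Ω → ℝ} (hf : Bdd f) (hg : Bdd g) :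
    (∫ x, op K f x * g x ∂π)^2
      ≤ (∫ x, op K f x * f x ∂π) * (∫ x, op K g x * g x ∂π) := by
  have hsym : ∫ x, op K g x * f x ∂π = ∫ x, op K f x * g x ∂π := by
    rw [ip_op_comm K π hrev hg hf]
    congr 1 with x
    ring
  refine cs_of_quadratic (fun t => ?_)
  have h0 := s_nonneg K π hlazy hrev (hf.add (hg.smul t))
  have hexp : ∀ x, op K (fun y => f y + t * g y) x * (f x + t * g x)
      = (op K f x * f x + t * (op K f x * g x + op K g x * f x))
        + t^2 * (op K g x * g x) := by
    intro x
    rw [op_comb K f g hf hg t x]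
    ring
  rw [show (fun x => f x + t * g x) = (fun y => f y + t * g y) from rfl] at h0
  have hrw : ∫ x, op K (fun y => f y + t * g y) x * (f x + t * g x) ∂π
      = (∫ x, op K f x * f x ∂π + t * (∫ x, op K f x * g x ∂π + ∫ x, op K g x * f x ∂π))
        + t^2 * ∫ x, op K g x * g x ∂π := by
    simp_rw [hexp]
    have hff := (hf.op K).mul hf
    have hfg := (hf.op K).mul hg
    have hgf := (hg.op K).mul hf
    have hgg := (hg.op K).mul hg
    rw [integral_add ((hff.add ((hfg.add hgf).smul t)).integrable π)
        (((hgg.smul (t^2)).integrable π)),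
      integral_add (hff.integrable π) (((hfg.add hgf).smul t).integrable π),
      integral_const_mul, integral_const_mul,
      integral_add (hfg.integrable π) (hgf.integrable π)]
  rw [hrw] at h0
  rw [hsym] at h0
  nlinarith [h0]

lemma ip_cs {f g : Ω → ℝ} (hf : Bdd f) (hg : Bdd g) :
    (∫ x, f x * g x ∂π)^2 ≤ (∫ x, f x^2 ∂π) * (∫ x, g x^2 ∂π) := by
  refine cs_of_quadratic (fun t => ?_)
  have h0 : 0 ≤ ∫ x, (f x + t * g x)^2 ∂π := integral_nonneg (fun x => sq_nonneg _)
  have hexp : ∀ x, (f x + t * g x)^2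
      = (f x^2 + t * (2 * (f x * g x))) + t^2 * g x^2 := fun x => by ring
  rw [show (fun x => (f x + t * g x)^2) = fun x => (f x^2 + t * (2 * (f x * g x))) + t^2 * g x^2
    from funext hexp] at h0
  rw [integral_add ((hf.sq.add (((hf.mul hg).smul 2).smul t)).integrable π)
      ((hg.sq.smul (t^2)).integrable π),
    integral_add (hf.sq.integrable π) ((((hf.mul hg).smul 2).smul t).integrable π),
    integral_const_mul, integral_const_mul, integral_const_mul] at h0
  nlinarith [h0]

lemma contraction_step (hlazy : Lazy K) (hrev : Reversible K π) {lam : ℝ} (hlam : 0 ≤ lam)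
    (hgap : ∀ u : Ω → ℝ, Bdd u → ∫ x, u x ∂π = 0 →
      ∫ x, op K u x * u x ∂π ≤ lam * ∫ x, u x^2 ∂π)
    {f : Ω → ℝ} (hf : Bdd f) (hf0 : ∫ x, f x ∂π = 0) :
    ∫ x, (op K f x)^2 ∂π ≤ lam^2 * ∫ x, f x^2 ∂π := by
  have hop : Bdd (op K f) := hf.op K
  have hop0 : ∫ x, op K f x ∂π = 0 := by rw [integral_op_eq K π hrev hf, hf0]
  have hsq : ∫ x, op K f x * op K f x ∂π = ∫ x, (op K f x)^2 ∂π := by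
    congr 1 with x
    ring
  have hcs := s_cs K π hlazy hrev hf hop
  rw [hsq] at hcs
  have h1 := hgap f hf hf0
  have h2 := hgap (op K f) hop hop0
  have h3 : ∫ x, (op K f x)^2 ∂π = ∫ x, op K f x ^ 2 ∂π := rfl
  have hNopnn : 0 ≤ ∫ x, (op K f x)^2 ∂π := integral_nonneg (fun x => sq_nonneg _)
  have hNnn : 0 ≤ ∫ x, f x^2 ∂π := integral_nonneg (fun x => sq_nonneg _)
  have hsff : 0 ≤ ∫ x, op K f x * f x ∂π := s_nonneg K π hlazy hrev hf
  have hs1 : 0 ≤ ∫ x, op K (op K f) x * op K f x ∂π := s_nonneg K π hlazy hrev hop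
  have hb : (∫ x, op K f x * f x ∂π) * (∫ x, op K (op K f) x * op K f x ∂π)
      ≤ (lam * ∫ x, f x^2 ∂π) * (lam * ∫ x, op K f x ^ 2 ∂π) :=
    mul_le_mul h1 h2 hs1 (by positivity)
  rcases eq_or_lt_of_le hNopnn with h | h
  · rw [← h]
    positivity
  · nlinarith [hcs.trans hb, h]

lemma conductance_nonneg : 0 ≤ conductance K π := by
  refine Real.sInf_nonneg (fun r hr => ?_)
  obtain ⟨A, hA, hpos, hhalf, rfl⟩ := hr
  positivity

lemma conductance_le_elem {S : Set Ω} (hS : MeasurableSet S)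
    (hpos : 0 < π S) (hhalf : π S ≤ 1 / 2) :
    conductance K π * (π S).toReal ≤ (∫⁻ x in S, K x Sᶜ ∂π).toReal := by
  have hmem : (∫⁻ x in S, K x Sᶜ ∂π).toReal / (π S).toReal
      ∈ {r : ℝ | ∃ A : Set Ω, MeasurableSet A ∧ 0 < π A ∧ π A ≤ 1 / 2 ∧
        r = (∫⁻ x in A, K x Aᶜ ∂π).toReal / (π A).toReal} := ⟨S, hS, hpos, hhalf, rfl⟩
  have hbdd : BddBelow {r : ℝ | ∃ A : Set Ω, MeasurableSet A ∧ 0 < π A ∧ π A ≤ 1 / 2 ∧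
      r = (∫⁻ x in A, K x Aᶜ ∂π).toReal / (π A).toReal} := by
    refine ⟨0, fun r hr => ?_⟩
    obtain ⟨A, hA, h1, h2, rfl⟩ := hr
    positivity
  have hle := csInf_le hbdd hmem
  have hmpos : 0 < (π S).toReal :=
    ENNReal.toReal_pos hpos.ne' (measure_ne_top π S)
  calc conductance K π * (π S).toReal
      ≤ ((∫⁻ x in S, K x Sᶜ ∂π).toReal / (π S).toReal) * (π S).toReal := by
        exact mul_le_mul_of_nonneg_right hle hmpos.le
    _ = (∫⁻ x in S, K x Sᶜ ∂π).toReal := by field_simp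

lemma conductance_le_half (hlazy : Lazy K) : conductance K π ≤ 1 / 2 := by
  by_cases hne : {r : ℝ | ∃ A : Set Ω, MeasurableSet A ∧ 0 < π A ∧ π A ≤ 1 / 2 ∧
      r = (∫⁻ x in A, K x Aᶜ ∂π).toReal / (π A).toReal}.Nonempty
  · obtain ⟨r, hr⟩ := hne
    obtain ⟨A, hA, hpos, hhalf, rfl⟩ := hr
    have hbdd : BddBelow {r : ℝ | ∃ A : Set Ω, MeasurableSet A ∧ 0 < π A ∧ π A ≤ 1 / 2 ∧
        r = (∫⁻ x in A, K x Aᶜ ∂π).toReal / (π A).toReal} := by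
      refine ⟨0, fun r hr => ?_⟩
      obtain ⟨B, hB, h1, h2, rfl⟩ := hr
      positivity
    refine le_trans (csInf_le hbdd ⟨A, hA, hpos, hhalf, rfl⟩) ?_
    have hflow : ∫⁻ x in A, K x Aᶜ ∂π ≤ 2⁻¹ * π A := by
      have hpt : ∀ x ∈ A, K x Aᶜ ≤ 2⁻¹ := by
        intro x hx
        have hdisj : Disjoint Aᶜ {x} := by
          simp [Set.disjoint_singleton_right, hx]
        have hsum : K x Aᶜ + K x {x} ≤ 1 := by
          rw [← measure_union hdisj (measurableSet_singleton x)]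
          calc K x (Aᶜ ∪ {x}) ≤ K x univ := measure_mono (subset_univ _)
            _ = 1 := measure_univ
        have hhalf' := hlazy x
        rw [one_div] at hhalf'
        calc K x Aᶜ ≤ 1 - K x {x} := by
              exact ENNReal.le_sub_of_add_le_right (measure_ne_top _ _) hsum
          _ ≤ 1 - 2⁻¹ := tsub_le_tsub_left hhalf' 1
          _ = 2⁻¹ := by
              rw [← ENNReal.inv_two_add_inv_two, ENNReal.add_sub_cancel_right (by norm_num)]
      calc ∫⁻ x in A, K x Aᶜ ∂π ≤ ∫⁻ _ in A, 2⁻¹ ∂π := by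
            refine setLIntegral_mono (by fun_prop) hpt
        _ = 2⁻¹ * π A := by
            rw [setLIntegral_const]
    have hApos : 0 < (π A).toReal := ENNReal.toReal_pos hpos.ne' (measure_ne_top π A)
    rw [div_le_iff₀ hApos]
    have : (∫⁻ x in A, K x Aᶜ ∂π).toReal ≤ (2⁻¹ * π A).toReal := by
      refine ENNReal.toReal_mono ?_ hflow
      refine ENNReal.mul_ne_top (by norm_num) (measure_ne_top π A)
    calc (∫⁻ x in A, K x Aᶜ ∂π).toReal ≤ (2⁻¹ * π A).toReal := this
      _ = 1 / 2 * (π A).toReal := by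
          rw [ENNReal.toReal_mul]
          norm_num
  · rw [conductance, Set.not_nonempty_iff_eq_empty.1 hne, Real.sInf_empty]
    norm_num


lemma lintegral_swap_eq (hrev : Reversible K π) {F : Ω × Ω → ENNReal} (hF : Measurable F) :
    ∫⁻ p, F (Prod.swap p) ∂(π ⊗ₘ K) = ∫⁻ p, F p ∂(π ⊗ₘ K) := by
  conv_rhs => rw [← swap_eq K π hrev]
  rw [lintegral_map hF measurable_swap]

lemma integral_fst_eq {f : Ω → ℝ} (hf : Bdd f) :
    ∫ p, f p.1 ∂(π ⊗ₘ K) = ∫ x, f x ∂π := by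
  have := integral_pairKP K π hf (Bdd.const 1)
  simpa [op_const] using this

lemma integral_snd_eq (hrev : Reversible K π) {f : Ω → ℝ} (hf : Bdd f) :
    ∫ p, f p.2 ∂(π ⊗ₘ K) = ∫ x, f x ∂π := by
  have h := integral_pairKP K π (Bdd.const 1) hf
  simp only [one_mul] at h
  rw [h, integral_op_eq K π hrev hf]

lemma eform_eq (hrev : Reversible K π) {f : Ω → ℝ} (hf : Bdd f) :
    ∫ p, (f p.1 - f p.2)^2 ∂(π ⊗ₘ K)
      = 2 * ∫ x, f x^2 ∂π - 2 * ∫ x, op K f x * f x ∂π := by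
  have hexp : ∀ p : Ω × Ω, (f p.1 - f p.2)^2
      = (f p.1^2 + f p.2^2) - 2 * (f p.1 * f p.2) := fun p => by ring
  have h1 : Bdd (fun p : Ω × Ω => f p.1^2) := hf.fst.sq
  have h2 : Bdd (fun p : Ω × Ω => f p.2^2) := hf.snd.sq
  have h12 : Bdd (fun p : Ω × Ω => f p.1 * f p.2) := hf.fst.mul hf.snd
  rw [show (fun p : Ω × Ω => (f p.1 - f p.2)^2)
      = fun p => (f p.1^2 + f p.2^2) - 2 * (f p.1 * f p.2) from funext hexp,
    integral_sub ((h1.add h2).integrable _) ((h12.smul 2).integrable _),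
    integral_add (h1.integrable _) (h2.integrable _), integral_const_mul]
  have e1 : ∫ p, f p.1^2 ∂(π ⊗ₘ K) = ∫ x, f x^2 ∂π := integral_fst_eq K π hf.sq
  have e2 : ∫ p, f p.2^2 ∂(π ⊗ₘ K) = ∫ x, f x^2 ∂π := integral_snd_eq K π hrev hf.sq
  have e3 : ∫ p, f p.1 * f p.2 ∂(π ⊗ₘ K) = ∫ x, op K f x * f x ∂π := by
    rw [integral_pairKP K π hf hf, ip_op_comm K π hrev hf hf]
  rw [e1, e2, e3]
  ring


lemma cheeger_nonneg (hrev : Reversible K π) {g : Ω → ℝ} (hg : Bdd g) (hgnn : ∀ x, 0 ≤ g x)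
    (hsupp : π {x | 0 < g x} ≤ 1 / 2) :
    conductance K π ^ 2 * ∫ x, g x^2 ∂π ≤ ∫ p, (g p.1 - g p.2)^2 ∂(π ⊗ₘ K) := by
  classical
  set μ := π ⊗ₘ K with hμdef
  have hφ : 0 ≤ conductance K π := conductance_nonneg K π
  set φ := conductance K π with hφdef
  set N := ∫ x, g x^2 ∂π with hNdef
  have hNnn : 0 ≤ N := integral_nonneg (fun x => sq_nonneg _)
  have hEnn : 0 ≤ ∫ p, (g p.1 - g p.2)^2 ∂μ := integral_nonneg (fun p => sq_nonneg _)
  rcases eq_or_lt_of_le hNnn with hN0 | hNpos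
  · rw [← hN0, mul_zero]
    exact hEnn
  -- the sublevel sets
  set S : ℝ → Set Ω := fun t => {x | t ≤ g x ^ 2} with hSdef
  have hSm : ∀ t, MeasurableSet (S t) := fun t =>
    measurableSet_le measurable_const hg.sq.meas
  -- step: key rectangle bound
  have hkey : ∀ t : ℝ, 0 < t → ENNReal.ofReal φ * π (S t) ≤ μ (S t ×ˢ (S t)ᶜ) := by
    intro t ht
    rw [Measure.compProd_apply_prod (hSm t) (hSm t).compl]
    by_cases hz : π (S t) = 0
    · simp [hz]
    have hsub : S t ⊆ {x | 0 < g x} := by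
      intro x hx
      have hx' : t ≤ g x ^ 2 := hx
      have : 0 < g x ^ 2 := lt_of_lt_of_le ht hx'
      rcases lt_or_eq_of_le (hgnn x) with h | h
      · exact h
      · exfalso
        rw [← h] at this
        simp at this
    have hhalf : π (S t) ≤ 1 / 2 := le_trans (measure_mono hsub) hsupp
    have hreal := conductance_le_elem K π (hSm t) (pos_iff_ne_zero.2 hz) hhalf
    have hflow_le : ∫⁻ x in S t, K x (S t)ᶜ ∂π ≤ 1 := by
      calc ∫⁻ x in S t, K x (S t)ᶜ ∂π ≤ ∫⁻ _ in S t, 1 ∂π :=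
            setLIntegral_mono (by fun_prop) (fun x _ => prob_le_one)
        _ = π (S t) := by rw [setLIntegral_const, one_mul]
        _ ≤ 1 := prob_le_one
    have hflow_ne : ∫⁻ x in S t, K x (S t)ᶜ ∂π ≠ ⊤ :=
      (lt_of_le_of_lt hflow_le (by norm_num)).ne
    calc ENNReal.ofReal φ * π (S t)
        = ENNReal.ofReal (φ * (π (S t)).toReal) := by
          rw [ENNReal.ofReal_mul hφ, ENNReal.ofReal_toReal (measure_ne_top π _)]
      _ ≤ ENNReal.ofReal ((∫⁻ x in S t, K x (S t)ᶜ ∂π).toReal) :=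
          ENNReal.ofReal_le_ofReal hreal
      _ = ∫⁻ x in S t, K x (S t)ᶜ ∂π := ENNReal.ofReal_toReal hflow_ne
  -- layer cake for the lower bound
  have hlayer : ∫⁻ x, ENNReal.ofReal (g x ^ 2) ∂π = ∫⁻ t in Ioi 0, π (S t) ∂volume :=
    lintegral_eq_lintegral_meas_le π (Filter.Eventually.of_forall (fun x => sq_nonneg _))
      hg.sq.meas.aemeasurable
  -- the product set computation
  set E : Set ((Ω × Ω) × ℝ) := {q | g q.1.2 ^ 2 < q.2 ∧ q.2 ≤ g q.1.1 ^ 2} with hEdef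
  have hgm1 : Measurable fun q : (Ω × Ω) × ℝ => g q.1.1 ^ 2 :=
    hg.sq.meas.comp (measurable_fst.comp measurable_fst)
  have hgm2 : Measurable fun q : (Ω × Ω) × ℝ => g q.1.2 ^ 2 :=
    hg.sq.meas.comp (measurable_snd.comp measurable_fst)
  have hEm : MeasurableSet E :=
    (measurableSet_lt hgm2 measurable_snd).inter (measurableSet_le measurable_snd hgm1)
  set m2 := μ.prod (volume.restrict (Ioi (0:ℝ))) with hm2def
  have hFm : Measurable fun p : Ω × Ω => ENNReal.ofReal (g p.1 ^ 2 - g p.2 ^ 2) :=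
    ENNReal.measurable_ofReal.comp
      ((hg.sq.meas.comp measurable_fst).sub (hg.sq.meas.comp measurable_snd))
  have hway1 : m2 E = ∫⁻ p, ENNReal.ofReal (g p.1 ^ 2 - g p.2 ^ 2) ∂μ := by
    rw [hm2def, Measure.prod_apply hEm]
    congr 1 with p
    have hslice : Prod.mk p ⁻¹' E = Ioc (g p.2 ^ 2) (g p.1 ^ 2) := by
      ext t
      simp [hEdef, Ioc, and_comm]
    rw [hslice, Measure.restrict_apply measurableSet_Ioc]
    have hsub2 : Ioc (g p.2 ^ 2) (g p.1 ^ 2) ∩ Ioi 0 = Ioc (g p.2 ^ 2) (g p.1 ^ 2) := by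
      refine inter_eq_self_of_subset_left (fun t ht => ?_)
      exact lt_of_le_of_lt (sq_nonneg (g p.2)) ht.1
    rw [hsub2, Real.volume_Ioc]
  have hway2 : m2 E = ∫⁻ t in Ioi 0, μ (S t ×ˢ (S t)ᶜ) ∂volume := by
    rw [hm2def, Measure.prod_apply_symm hEm]
    congr 1 with t
    congr 1
    ext p
    simp only [hEdef, mem_preimage, mem_setOf_eq, mem_prod, mem_compl_iff, hSdef, not_le]
    tauto
  -- lower bound on P
  have hP_lower : ENNReal.ofReal φ * ∫⁻ x, ENNReal.ofReal (g x ^ 2) ∂π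
      ≤ ∫⁻ p, ENNReal.ofReal (g p.1 ^ 2 - g p.2 ^ 2) ∂μ := by
    rw [hlayer, ← hway1, hway2, ← lintegral_const_mul' _ _ ENNReal.ofReal_ne_top]
    refine lintegral_mono_ae ((ae_restrict_iff' measurableSet_Ioi).2
      (Filter.Eventually.of_forall (fun t ht => hkey t ht)))
  -- symmetry
  have hswapP : ∫⁻ p, ENNReal.ofReal (g p.2 ^ 2 - g p.1 ^ 2) ∂μ
      = ∫⁻ p, ENNReal.ofReal (g p.1 ^ 2 - g p.2 ^ 2) ∂μ := by
    have := lintegral_swap_eq K π hrev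
      (F := fun p => ENNReal.ofReal (g p.1 ^ 2 - g p.2 ^ 2)) hFm
    simpa using this
  -- absolute value
  have habs : ∫⁻ p, ENNReal.ofReal |g p.1 ^ 2 - g p.2 ^ 2| ∂μ
      = 2 * ∫⁻ p, ENNReal.ofReal (g p.1 ^ 2 - g p.2 ^ 2) ∂μ := by
    have hpt : ∀ p : Ω × Ω, ENNReal.ofReal |g p.1 ^ 2 - g p.2 ^ 2|
        = ENNReal.ofReal (g p.1 ^ 2 - g p.2 ^ 2) + ENNReal.ofReal (g p.2 ^ 2 - g p.1 ^ 2) := by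
      intro p
      rcases le_total (g p.2 ^ 2) (g p.1 ^ 2) with h | h
      · rw [abs_of_nonneg (by linarith : (0:ℝ) ≤ g p.1 ^ 2 - g p.2 ^ 2),
          ENNReal.ofReal_of_nonpos (by linarith : g p.2 ^ 2 - g p.1 ^ 2 ≤ 0), add_zero]
      · rw [abs_of_nonpos (by linarith : g p.1 ^ 2 - g p.2 ^ 2 ≤ 0),
          ENNReal.ofReal_of_nonpos (by linarith : g p.1 ^ 2 - g p.2 ^ 2 ≤ 0), zero_add, neg_sub]
    simp_rw [hpt]
    rw [lintegral_add_left hFm, hswapP, two_mul]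
  -- real version of the lower bound
  set Dr := ∫ p, |g p.1 ^ 2 - g p.2 ^ 2| ∂μ with hDrdef
  have hDrnn : 0 ≤ Dr := integral_nonneg (fun p => abs_nonneg _)
  have hBddD : Bdd (fun p : Ω × Ω => |g p.1 ^ 2 - g p.2 ^ 2|) := (hg.fst.sq.sub hg.snd.sq).abs
  have hDr_enn : ENNReal.ofReal Dr = ∫⁻ p, ENNReal.ofReal |g p.1 ^ 2 - g p.2 ^ 2| ∂μ :=
    ofReal_integral_eq_lintegral_ofReal (hBddD.integrable μ)
      (Filter.Eventually.of_forall (fun p => abs_nonneg _))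
  have hN_enn : ENNReal.ofReal N = ∫⁻ x, ENNReal.ofReal (g x ^ 2) ∂π :=
    ofReal_integral_eq_lintegral_ofReal (hg.sq.integrable π)
      (Filter.Eventually.of_forall (fun x => sq_nonneg _))
  have hDlow : 2 * φ * N ≤ Dr := by
    have hchain : ENNReal.ofReal (2 * φ * N) ≤ ENNReal.ofReal Dr := by
      rw [hDr_enn, habs]
      calc ENNReal.ofReal (2 * φ * N) = 2 * (ENNReal.ofReal φ * ENNReal.ofReal N) := by
            rw [ENNReal.ofReal_mul (by positivity : (0:ℝ) ≤ 2 * φ),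
              ENNReal.ofReal_mul (by norm_num : (0:ℝ) ≤ 2)]
            simp [mul_assoc]
        _ ≤ 2 * ∫⁻ p, ENNReal.ofReal (g p.1 ^ 2 - g p.2 ^ 2) ∂μ := by
            rw [hN_enn]
            exact mul_le_mul_right hP_lower 2
    exact (ENNReal.ofReal_le_ofReal_iff hDrnn).1 hchain
  -- Cauchy-Schwarz upper bound on Dr
  have habs_eq : ∀ p : Ω × Ω, |g p.1 ^ 2 - g p.2 ^ 2|
      = |g p.1 - g p.2| * (g p.1 + g p.2) := by
    intro p
    have h1 : g p.1 ^ 2 - g p.2 ^ 2 = (g p.1 - g p.2) * (g p.1 + g p.2) := by ring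
    rw [h1, abs_mul,
      abs_of_nonneg (show (0:ℝ) ≤ g p.1 + g p.2 by have := hgnn p.1; have := hgnn p.2; linarith)]
  have hBdd_d : Bdd (fun p : Ω × Ω => g p.1 - g p.2) := hg.fst.sub hg.snd
  have hBdd_s : Bdd (fun p : Ω × Ω => g p.1 + g p.2) := hg.fst.add hg.snd
  have hcs : Dr ^ 2 ≤ (∫ p, (g p.1 - g p.2)^2 ∂μ) * (∫ p, (g p.1 + g p.2)^2 ∂μ) := by
    have h1 : Dr = ∫ p, |g p.1 - g p.2| * (g p.1 + g p.2) ∂μ := by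
      rw [hDrdef]
      congr 1 with p
      exact habs_eq p
    rw [h1]
    have := cs_mu μ hBdd_d.abs hBdd_s
    calc (∫ p, |g p.1 - g p.2| * (g p.1 + g p.2) ∂μ) ^ 2
        ≤ (∫ p, |g p.1 - g p.2| ^ 2 ∂μ) * (∫ p, (g p.1 + g p.2)^2 ∂μ) := this
      _ = (∫ p, (g p.1 - g p.2)^2 ∂μ) * (∫ p, (g p.1 + g p.2)^2 ∂μ) := by
          congr 1
          congr 1 with p
          rw [sq_abs]
  have hsum_sq : ∫ p, (g p.1 + g p.2)^2 ∂μ ≤ 4 * N := by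
    have hpt : ∀ p : Ω × Ω, (g p.1 + g p.2)^2 ≤ 2 * g p.1 ^ 2 + 2 * g p.2 ^ 2 :=
      fun p => by nlinarith [sq_nonneg (g p.1 - g p.2)]
    have hmono := integral_mono (hBdd_s.sq.integrable μ)
      (((hg.fst.sq.smul 2).add (hg.snd.sq.smul 2)).integrable μ) hpt
    have hsplit : ∫ p, (2 * g p.1 ^ 2 + 2 * g p.2 ^ 2) ∂μ = 4 * N := by
      rw [integral_add ((hg.fst.sq.smul 2).integrable μ) ((hg.snd.sq.smul 2).integrable μ),
        integral_const_mul, integral_const_mul, integral_fst_eq K π hg.sq,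
        integral_snd_eq K π hrev hg.sq, ← hNdef]
      ring
    linarith
  -- combine
  have hEn : 0 ≤ ∫ p, (g p.1 - g p.2)^2 ∂μ := hEnn
  have hDsq : (2 * φ * N)^2 ≤ Dr ^ 2 := by
    have h2 : 0 ≤ 2 * φ * N := by positivity
    exact pow_le_pow_left₀ h2 hDlow 2
  nlinarith [hDsq.trans hcs, hsum_sq, hNpos, hφ, hEn,
    mul_le_mul_of_nonneg_left hsum_sq hEn]


lemma real_aux (a b c : ℝ) :
    (max (a - c) 0 - max (b - c) 0)^2 + (max (c - a) 0 - max (c - b) 0)^2 ≤ (a - b)^2 := by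
  rcases le_total a c with h1 | h1 <;> rcases le_total b c with h2 | h2
  · rw [max_eq_right (by linarith : a - c ≤ 0), max_eq_right (by linarith : b - c ≤ 0),
      max_eq_left (by linarith : 0 ≤ c - a), max_eq_left (by linarith : 0 ≤ c - b)]
    nlinarith
  · rw [max_eq_right (by linarith : a - c ≤ 0), max_eq_left (by linarith : 0 ≤ b - c),
      max_eq_left (by linarith : 0 ≤ c - a), max_eq_right (by linarith : c - b ≤ 0)]
    nlinarith [mul_nonneg (by linarith : (0:ℝ) ≤ b - c) (by linarith : (0:ℝ) ≤ c - a)]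
  · rw [max_eq_left (by linarith : 0 ≤ a - c), max_eq_right (by linarith : b - c ≤ 0),
      max_eq_right (by linarith : c - a ≤ 0), max_eq_left (by linarith : 0 ≤ c - b)]
    nlinarith [mul_nonneg (by linarith : (0:ℝ) ≤ a - c) (by linarith : (0:ℝ) ≤ c - b)]
  · rw [max_eq_left (by linarith : 0 ≤ a - c), max_eq_left (by linarith : 0 ≤ b - c),
      max_eq_right (by linarith : c - a ≤ 0), max_eq_right (by linarith : c - b ≤ 0)]
    nlinarith

lemma max_sq_aux (a c : ℝ) : (max (a - c) 0)^2 + (max (c - a) 0)^2 = (a - c)^2 := by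
  rcases le_total a c with h | h
  · rw [max_eq_right (by linarith : a - c ≤ 0), max_eq_left (by linarith : 0 ≤ c - a)]
    ring_nf
  · rw [max_eq_left (by linarith : 0 ≤ a - c), max_eq_right (by linarith : c - a ≤ 0)]
    ring_nf

lemma half_sub_aux : (1:ENNReal) - 1/2 = 1/2 := by
  rw [one_div, ← ENNReal.inv_two_add_inv_two, ENNReal.add_sub_cancel_right (by norm_num)]

lemma exists_median {f : Ω → ℝ} (hf : Bdd f) :
    ∃ c : ℝ, π {x | c < f x} ≤ 1/2 ∧ π {x | f x < c} ≤ 1/2 := by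
  obtain ⟨C, hC⟩ := hf.bdd
  set S := {t : ℝ | (1:ENNReal)/2 ≤ π {x | f x ≤ t}} with hS
  have hmemC : C ∈ S := by
    have huniv : {x | f x ≤ C} = univ := eq_univ_of_forall (fun x => (abs_le.1 (hC x)).2)
    show (1:ENNReal)/2 ≤ π {x | f x ≤ C}
    rw [huniv, measure_univ, one_div]
    exact ENNReal.inv_le_one.2 one_le_two
  have hbdd : BddBelow S := by
    refine ⟨-C - 1, fun t ht => ?_⟩
    by_contra hlt
    push_neg at hlt
    have hempty : {x | f x ≤ t} = ∅ := by
      ext x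
      simp only [mem_setOf_eq, mem_empty_iff_false, iff_false, not_le]
      have := (abs_le.1 (hC x)).1
      linarith
    have ht' : (1:ENNReal)/2 ≤ π {x | f x ≤ t} := ht
    rw [hempty, measure_empty] at ht'
    simp at ht'
  set c := sInf S with hc
  have hmle : MeasurableSet {x | f x ≤ c} := measurableSet_le hf.meas measurable_const
  refine ⟨c, ?_, ?_⟩
  · have hmono : ∀ ε : ℝ, 0 < ε → π {x | c + ε < f x} ≤ 1/2 := by
      intro ε hε
      have hcε : c + ε ∈ S := by
        obtain ⟨t, htS, htlt⟩ := exists_lt_of_csInf_lt ⟨C, hmemC⟩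
          (lt_add_of_pos_right c hε)
        show (1:ENNReal)/2 ≤ π {x | f x ≤ c + ε}
        exact le_trans htS (measure_mono (fun x hx => le_trans hx htlt.le))
      have hcompl : {x | c + ε < f x} ⊆ {x | f x ≤ c + ε}ᶜ := by
        intro x hx
        simp only [mem_compl_iff, mem_setOf_eq, not_le]
        exact hx
      calc π {x | c + ε < f x} ≤ π ({x | f x ≤ c + ε}ᶜ) := measure_mono hcompl
        _ = 1 - π {x | f x ≤ c + ε} :=
            prob_compl_eq_one_sub (measurableSet_le hf.meas measurable_const)
        _ ≤ 1 - 1/2 := tsub_le_tsub_left hcε 1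
        _ = 1/2 := half_sub_aux
    have hset : {x | c < f x} = ⋃ n : ℕ, {x | c + 1/((n:ℝ)+1) < f x} := by
      ext x
      simp only [mem_setOf_eq, mem_iUnion]
      constructor
      · intro hx
        obtain ⟨n, hn⟩ := exists_nat_one_div_lt (by linarith : (0:ℝ) < f x - c)
        exact ⟨n, by push_cast at hn ⊢; linarith⟩
      · rintro ⟨n, hn⟩
        have h0 : (0:ℝ) < 1/((n:ℝ)+1) := by positivity
        linarith
    have hmon : Monotone fun n : ℕ => {x | c + 1/((n:ℝ)+1) < f x} := by
      intro m n hmn x hx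
      simp only [mem_setOf_eq] at *
      have hle : 1/((n:ℝ)+1) ≤ 1/((m:ℝ)+1) := by
        apply one_div_le_one_div_of_le (by positivity)
        have : (m:ℝ) ≤ n := by exact_mod_cast hmn
        linarith
      linarith
    rw [hset, Directed.measure_iUnion hmon.directed_le]
    exact iSup_le fun n => hmono _ (by positivity)
  · have hmono2 : ∀ ε : ℝ, 0 < ε → π {x | f x ≤ c - ε} ≤ 1/2 := by
      intro ε hε
      have hnot : (c - ε) ∉ S := by
        intro hmem
        have := csInf_le hbdd hmem
        rw [← hc] at this
        linarith
      have hnot' : ¬ ((1:ENNReal)/2 ≤ π {x | f x ≤ c - ε}) := hnot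
      exact (not_le.1 hnot').le
    have hset2 : {x | f x < c} = ⋃ n : ℕ, {x | f x ≤ c - 1/((n:ℝ)+1)} := by
      ext x
      simp only [mem_setOf_eq, mem_iUnion]
      constructor
      · intro hx
        obtain ⟨n, hn⟩ := exists_nat_one_div_lt (by linarith : (0:ℝ) < c - f x)
        exact ⟨n, by push_cast at hn ⊢; linarith⟩
      · rintro ⟨n, hn⟩
        have h0 : (0:ℝ) < 1/((n:ℝ)+1) := by positivity
        linarith
    have hmon2 : Monotone fun n : ℕ => {x | f x ≤ c - 1/((n:ℝ)+1)} := by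
      intro m n hmn x hx
      simp only [mem_setOf_eq] at *
      have hle : 1/((n:ℝ)+1) ≤ 1/((m:ℝ)+1) := by
        apply one_div_le_one_div_of_le (by positivity)
        have : (m:ℝ) ≤ n := by exact_mod_cast hmn
        linarith
      linarith
    rw [hset2, Directed.measure_iUnion hmon2.directed_le]
    exact iSup_le fun n => hmono2 _ (by positivity)

lemma gap_lemma (hlazy : Lazy K) (hrev : Reversible K π) {f : Ω → ℝ} (hf : Bdd f)
    (hf0 : ∫ x, f x ∂π = 0) :
    ∫ x, op K f x * f x ∂π ≤ (1 - conductance K π^2/2) * ∫ x, f x^2 ∂π := by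
  obtain ⟨c, hc1, hc2⟩ := exists_median π hf
  have hφ : 0 ≤ conductance K π := conductance_nonneg K π
  have hgp : Bdd (fun x => max (f x - c) 0) := (hf.sub (Bdd.const c)).posPart
  have hgm : Bdd (fun x => max (c - f x) 0) := ((Bdd.const c).sub hf).posPart
  have hsupp_p : π {x | 0 < max (f x - c) 0} ≤ 1/2 := by
    have : {x | 0 < max (f x - c) 0} = {x | c < f x} := by
      ext x
      simp only [mem_setOf_eq, lt_max_iff, lt_self_iff_false, or_false, sub_pos]
    rw [this]
    exact hc1
  have hsupp_m : π {x | 0 < max (c - f x) 0} ≤ 1/2 := by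
    have : {x | 0 < max (c - f x) 0} = {x | f x < c} := by
      ext x
      simp only [mem_setOf_eq, lt_max_iff, lt_self_iff_false, or_false, sub_pos]
    rw [this]
    exact hc2
  have hch_p := cheeger_nonneg K π hrev hgp (fun x => le_max_right _ _) hsupp_p
  have hch_m := cheeger_nonneg K π hrev hgm (fun x => le_max_right _ _) hsupp_m
  -- E decomposition
  have hBp : Bdd (fun p : Ω × Ω => max (f p.1 - c) 0 - max (f p.2 - c) 0) :=
    hgp.fst.sub hgp.snd
  have hBm : Bdd (fun p : Ω × Ω => max (c - f p.1) 0 - max (c - f p.2) 0) :=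
    hgm.fst.sub hgm.snd
  have hBf : Bdd (fun p : Ω × Ω => f p.1 - f p.2) := hf.fst.sub hf.snd
  have hEsum : (∫ p, (max (f p.1 - c) 0 - max (f p.2 - c) 0)^2 ∂(π ⊗ₘ K))
        + (∫ p, (max (c - f p.1) 0 - max (c - f p.2) 0)^2 ∂(π ⊗ₘ K))
      ≤ ∫ p, (f p.1 - f p.2)^2 ∂(π ⊗ₘ K) := by
    have hpt : ∀ p : Ω × Ω,
        (max (f p.1 - c) 0 - max (f p.2 - c) 0)^2 + (max (c - f p.1) 0 - max (c - f p.2) 0)^2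
          ≤ (f p.1 - f p.2)^2 := fun p => real_aux (f p.1) (f p.2) c
    have := integral_mono ((hBp.sq.add hBm.sq).integrable (π ⊗ₘ K))
      (hBf.sq.integrable (π ⊗ₘ K)) hpt
    rwa [integral_add (hBp.sq.integrable _) (hBm.sq.integrable _)] at this
  -- N decomposition
  have hNsum : (∫ x, (max (f x - c) 0)^2 ∂π) + (∫ x, (max (c - f x) 0)^2 ∂π)
      = ∫ x, f x^2 ∂π + c^2 := by
    have h1 : ∫ x, ((max (f x - c) 0)^2 + (max (c - f x) 0)^2) ∂π
        = ∫ x, (f x - c)^2 ∂π := by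
      congr 1 with x
      exact max_sq_aux (f x) c
    have h2 : ∫ x, (f x - c)^2 ∂π = ∫ x, f x^2 ∂π + c^2 := by
      have hexp : ∀ x, (f x - c)^2 = (f x^2 - (2*c) * f x) + c^2 := fun x => by ring
      rw [show (fun x => (f x - c)^2) = fun x => (f x^2 - (2*c) * f x) + c^2 from funext hexp,
        integral_add ((hf.sq.sub (hf.smul (2*c))).integrable π) (integrable_const _),
        integral_sub (hf.sq.integrable π) ((hf.smul (2*c)).integrable π),
        integral_const_mul, hf0, integral_const]
      simp
    rw [← h2, ← h1, integral_add (hgp.sq.integrable π) (hgm.sq.integrable π)]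
  -- Dirichlet form identity
  have hE : ∫ p, (f p.1 - f p.2)^2 ∂(π ⊗ₘ K)
      = 2 * ∫ x, f x^2 ∂π - 2 * ∫ x, op K f x * f x ∂π := eform_eq K π hrev hf
  have hNpnn : 0 ≤ ∫ x, (max (f x - c) 0)^2 ∂π := integral_nonneg (fun x => sq_nonneg _)
  have hNmnn : 0 ≤ ∫ x, (max (c - f x) 0)^2 ∂π := integral_nonneg (fun x => sq_nonneg _)
  nlinarith [hch_p, hch_m, hEsum, hNsum, hE, sq_nonneg c, sq_nonneg (conductance K π), hφ]


lemma opiter_integral (hrev : Reversible K π) {h : Ω → ℝ} (hh : Bdd h) :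
    ∀ j, ∫ x, opiter K j h x ∂π = ∫ x, h x ∂π := by
  intro j
  induction j generalizing h hh with
  | zero => rfl
  | succ n ih =>
      rw [opiter_succ, ih (hh.op K), integral_op_eq K π hrev hh]

lemma opiter_adjoint (hrev : Reversible K π) :
    ∀ j, ∀ {h g : Ω → ℝ}, Bdd h → Bdd g →
      ∫ x, opiter K j h x * g x ∂π = ∫ x, h x * opiter K j g x ∂π := by
  intro j
  induction j with
  | zero => intro h g _ _; rfl
  | succ n ih =>
      intro h g hh hg
      rw [opiter_succ, ih (hh.op K) hg, ip_op_comm K π hrev hh (opiter_bdd K hg n),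
        ← opiter_succ']

lemma opiter_contract (hlazy : Lazy K) (hrev : Reversible K π) {lam : ℝ} (hlam : 0 ≤ lam)
    (hgap : ∀ u : Ω → ℝ, Bdd u → ∫ x, u x ∂π = 0 →
      ∫ x, op K u x * u x ∂π ≤ lam * ∫ x, u x^2 ∂π) :
    ∀ j, ∀ {g : Ω → ℝ}, Bdd g → ∫ x, g x ∂π = 0 →
      ∫ x, (opiter K j g x)^2 ∂π ≤ (lam^j)^2 * ∫ x, g x^2 ∂π := by
  intro j
  induction j with
  | zero =>
      intro g _ _
      rw [opiter_zero]
      simp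
  | succ n ih =>
      intro g hgB hg0
      have hopB : Bdd (op K g) := hgB.op K
      have hop0 : ∫ x, op K g x ∂π = 0 := by rw [integral_op_eq K π hrev hgB, hg0]
      have h1 := ih hopB hop0
      have h2 := contraction_step K π hlazy hrev hlam hgap hgB hg0
      rw [opiter_succ]
      calc ∫ x, (opiter K n (op K g) x)^2 ∂π ≤ (lam^n)^2 * ∫ x, (op K g x)^2 ∂π := h1
        _ ≤ (lam^n)^2 * (lam^2 * ∫ x, g x^2 ∂π) :=
            mul_le_mul_of_nonneg_left h2 (sq_nonneg _)
        _ = (lam^(n+1))^2 * ∫ x, g x^2 ∂π := by ring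

lemma markov_kpow : ∀ j, IsMarkovKernel (Kpow K j) := by
  intro j
  induction j with
  | zero => rw [Kpow]; infer_instance
  | succ n ih => rw [Kpow]; exact Kernel.IsMarkovKernel.comp _ _

lemma kpow_toReal {A : Set Ω} (hA : MeasurableSet A) :
    ∀ j, (fun x => (Kpow K j x A).toReal) = opiter K j (A.indicator (fun _ => (1:ℝ))) := by
  intro j
  induction j with
  | zero =>
      funext x
      rw [Kpow]
      rw [Kernel.id_apply, Measure.dirac_apply' _ hA]
      rw [opiter_zero]
      by_cases hx : x ∈ A <;> simp [hx]
  | succ n ih =>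
      funext x
      haveI := markov_kpow K n
      rw [Kpow, Kernel.comp_apply' _ _ _ hA]
      have hmeas : Measurable fun y => Kpow K n y A := Kernel.measurable_coe _ hA
      have htoReal : (∫⁻ y, Kpow K n y A ∂(K x)).toReal
          = ∫ y, (Kpow K n y A).toReal ∂(K x) :=
        (integral_toReal hmeas.aemeasurable
          (Filter.Eventually.of_forall (fun y => lt_of_le_of_lt prob_le_one (by norm_num)))).symm
      rw [htoReal, opiter_succ']
      have : (fun y => (Kpow K n y A).toReal) = opiter K n (A.indicator (fun _ => (1:ℝ))) := ih
      rw [show (∫ y, (Kpow K n y A).toReal ∂(K x))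
          = op K (fun y => (Kpow K n y A).toReal) x from rfl, this]

end Main

theorem stmt10 {Ω : Type*} [MeasurableSpace Ω] [MeasurableSingletonClass Ω]
    (K : Kernel Ω Ω) [IsMarkovKernel K]
    (π : Measure Ω) [IsProbabilityMeasure π]
    (hlazy : Lazy K) (hrev : Reversible K π)
    (ν : Measure Ω) [IsProbabilityMeasure ν]
    (d : Ω → ENNReal) (hd : Measurable d) (hν : ν = π.withDensity d)
    (M : ℝ) (hM : ∀ x, d x ≤ ENNReal.ofReal M)
    (A : Set Ω) (hA : MeasurableSet A) (j : ℕ) :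
    |∫ x, (Kpow K j x A).toReal ∂ν - (π A).toReal|
      ≤ Real.sqrt M * (1 - conductance K π ^ 2 / 2) ^ j := by
  classical
  have hM0 : 0 ≤ M := by
    by_contra h
    push_neg at h
    have hd0 : ∀ x, d x = 0 := fun x => le_antisymm
      (by rw [← ENNReal.ofReal_of_nonpos h.le]; exact hM x) (zero_le)
    have h1 : ν univ = 0 := by
      rw [hν, withDensity_apply _ MeasurableSet.univ, Measure.restrict_univ]
      calc ∫⁻ x, d x ∂π = ∫⁻ _, 0 ∂π := lintegral_congr (fun x => hd0 x)
        _ = 0 := lintegral_zero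
    rw [measure_univ] at h1
    norm_num at h1
  have hφ0 : 0 ≤ conductance K π := conductance_nonneg K π
  have hφh : conductance K π ≤ 1/2 := conductance_le_half K π hlazy
  set lam := 1 - conductance K π ^ 2 / 2 with hlam
  have hlam0 : 0 ≤ lam := by rw [hlam]; nlinarith
  set dr : Ω → ℝ := fun x => (d x).toReal with hdr
  have hdfin : ∀ x, d x < ⊤ := fun x => lt_of_le_of_lt (hM x) ENNReal.ofReal_lt_top
  have hdrB : Bdd dr := by
    refine ⟨ENNReal.measurable_toReal.comp hd, ⟨M, fun x => ?_⟩⟩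
    rw [hdr, abs_of_nonneg ENNReal.toReal_nonneg]
    have := ENNReal.toReal_mono ENNReal.ofReal_ne_top (hM x)
    rwa [ENNReal.toReal_ofReal hM0] at this
  have hdrle : ∀ x, dr x ≤ M := by
    intro x
    have := ENNReal.toReal_mono ENNReal.ofReal_ne_top (hM x)
    rwa [ENNReal.toReal_ofReal hM0] at this
  have hdrnn : ∀ x, 0 ≤ dr x := fun x => ENNReal.toReal_nonneg
  have hν' : ν = π.withDensity (fun x => ((d x).toNNReal : ENNReal)) := by
    rw [hν]
    refine withDensity_congr_ae ?_
    filter_upwards with x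
    exact (ENNReal.coe_toNNReal (hdfin x).ne).symm
  have hmeasNN : Measurable fun x => (d x).toNNReal :=
    ENNReal.measurable_toNNReal.comp hd
  have hνint : ∀ g : Ω → ℝ, ∫ x, g x ∂ν = ∫ x, dr x * g x ∂π := by
    intro g
    rw [hν', integral_withDensity_eq_integral_smul hmeasNN g]
    simp only [NNReal.smul_def]
    rfl
  have hdrint : ∫ x, dr x ∂π = 1 := by
    have h1 : ∫ x, (d x).toReal ∂π = (∫⁻ x, d x ∂π).toReal :=
      integral_toReal hd.aemeasurable (Filter.Eventually.of_forall hdfin)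
    have h2 : ∫⁻ x, d x ∂π = 1 := by
      have h3 := measure_univ (μ := ν)
      rw [hν, withDensity_apply _ MeasurableSet.univ, Measure.restrict_univ] at h3
      exact h3
    rw [hdr, h1, h2]
    simp
  set indA := A.indicator (fun _ => (1:ℝ)) with hindA
  have hindB : Bdd indA := Bdd.indicator hA
  have hkp := kpow_toReal K hA j
  have hLHS1 : ∫ x, (Kpow K j x A).toReal ∂ν = ∫ x, indA x * opiter K j dr x ∂π := by
    calc ∫ x, (Kpow K j x A).toReal ∂ν = ∫ x, opiter K j indA x ∂ν :=
          integral_congr_ae (Filter.Eventually.of_forall (fun x => congrFun hkp x))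
      _ = ∫ x, dr x * opiter K j indA x ∂π := hνint _
      _ = ∫ x, opiter K j indA x * dr x ∂π :=
          integral_congr_ae (Filter.Eventually.of_forall (fun x => mul_comm _ _))
      _ = ∫ x, indA x * opiter K j dr x ∂π := opiter_adjoint K π hrev j hindB hdrB
  have hPA : (π A).toReal = ∫ x, indA x * opiter K j (fun _ => (1:ℝ)) x ∂π := by
    rw [opiter_one K j]
    simp only [mul_one]
    rw [hindA, integral_indicator_const (1:ℝ) hA]
    simp [Measure.real]
  set f0 : Ω → ℝ := fun x => dr x - 1 with hf0def
  have hf0B : Bdd f0 := hdrB.sub (Bdd.const 1)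
  have hf00 : ∫ x, f0 x ∂π = 0 := by
    rw [hf0def, integral_sub (hdrB.integrable π) (integrable_const 1), hdrint, integral_const]
    simp
  have hsubst := opiter_sub K hdrB (Bdd.const 1) j
  have hdiff : ∫ x, (Kpow K j x A).toReal ∂ν - (π A).toReal
      = ∫ x, indA x * opiter K j f0 x ∂π := by
    rw [hLHS1, hPA, ← integral_sub ((hindB.mul (opiter_bdd K hdrB j)).integrable π)
      ((hindB.mul (opiter_bdd K (Bdd.const 1) j)).integrable π)]
    refine integral_congr_ae (Filter.Eventually.of_forall (fun x => ?_))
    rw [hf0def, hsubst]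
    ring
  have hgap' : ∀ u : Ω → ℝ, Bdd u → ∫ x, u x ∂π = 0 →
      ∫ x, op K u x * u x ∂π ≤ lam * ∫ x, u x^2 ∂π := by
    intro u hu hu0
    rw [hlam]
    exact gap_lemma K π hlazy hrev hu hu0
  have hcontr := opiter_contract K π hlazy hrev hlam0 hgap' j hf0B hf00
  have hNf0 : ∫ x, f0 x^2 ∂π ≤ M := by
    have hpt : ∀ x, f0 x^2 ≤ (M * dr x - 2 * dr x) + 1 := by
      intro x
      have h1 := hdrle x
      have h2 := hdrnn x
      simp only [hf0def]
      nlinarith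
    have hmono := integral_mono (hf0B.sq.integrable π)
      ((((hdrB.smul M).sub (hdrB.smul 2)).add (Bdd.const 1)).integrable π) hpt
    have heval : ∫ x, ((M * dr x - 2 * dr x) + 1) ∂π = M - 1 := by
      rw [integral_add (((hdrB.smul M).sub (hdrB.smul 2)).integrable π) (integrable_const 1),
        integral_sub ((hdrB.smul M).integrable π) ((hdrB.smul 2).integrable π),
        integral_const_mul, integral_const_mul, hdrint, integral_const]
      simp
      ring
    rw [heval] at hmono
    linarith
  have hcs := cs_mu π hindB (opiter_bdd K hf0B j)
  have hindsq : ∫ x, indA x^2 ∂π = (π A).toReal := by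
    have hpt : ∀ x, indA x^2 = indA x := by
      intro x
      rw [hindA]
      by_cases hx : x ∈ A <;> simp [hx]
    rw [integral_congr_ae (Filter.Eventually.of_forall hpt), hindA,
      integral_indicator_const (1:ℝ) hA]
    simp [Measure.real]
  have hPA1 : (π A).toReal ≤ 1 := by
    have := ENNReal.toReal_mono ENNReal.one_ne_top (prob_le_one (μ := π) (s := A))
    simpa using this
  have hOnn : 0 ≤ ∫ x, (opiter K j f0 x)^2 ∂π := integral_nonneg (fun x => sq_nonneg _)
  have hf0nn : 0 ≤ ∫ x, f0 x^2 ∂π := integral_nonneg (fun x => sq_nonneg _)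
  have hIsq : (∫ x, indA x * opiter K j f0 x ∂π)^2 ≤ M * (lam^j)^2 := by
    have hPAnn : 0 ≤ (π A).toReal := ENNReal.toReal_nonneg
    calc (∫ x, indA x * opiter K j f0 x ∂π)^2
        ≤ (∫ x, indA x^2 ∂π) * ∫ x, (opiter K j f0 x)^2 ∂π := hcs
      _ = (π A).toReal * ∫ x, (opiter K j f0 x)^2 ∂π := by rw [hindsq]
      _ ≤ 1 * ∫ x, (opiter K j f0 x)^2 ∂π := mul_le_mul_of_nonneg_right hPA1 hOnn
      _ = ∫ x, (opiter K j f0 x)^2 ∂π := one_mul _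
      _ ≤ (lam^j)^2 * ∫ x, f0 x^2 ∂π := hcontr
      _ ≤ (lam^j)^2 * M := mul_le_mul_of_nonneg_left hNf0 (sq_nonneg _)
      _ = M * (lam^j)^2 := by ring
  rw [hdiff, ← Real.sqrt_sq_eq_abs]
  have h2 : (Real.sqrt M * lam^j)^2 = M * (lam^j)^2 := by
    rw [mul_pow, Real.sq_sqrt hM0]
  have h3 := Real.sqrt_le_sqrt (hIsq.trans_eq h2.symm)
  rwa [Real.sqrt_sq (mul_nonneg (Real.sqrt_nonneg M) (pow_nonneg hlam0 j))] at h3
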